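/- For all real γ ≥ 0, (e^γ − 1)² / (e^{2γ} − (1 + γ/4)²) ≤ (3/2)·γ, where for γ = 0 the left-hand side is interpreted as its limit 0 (equivalently: (e^γ − 1)² ≤ (3/2)γ·(e^{2γ} − (1 + γ/4)²) for all γ ≥ 0). -/

import Mathlib

lemma key_exp (γ : ℝ) (hγ : 0 ≤ γ) : (2 - γ) * Real.exp γ ≤ 2 + γ := by
  set f : ℝ → ℝ := fun x => (2 + x) * Real.exp (-x) - (2 - x) with hf
  have hd : ∀ x : ℝ, HasDerivAt f (1 - (1 + x) * Real.exp (-x)) x := by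
    intro x
    have he : HasDerivAt (fun x : ℝ => Real.exp (-x)) (-Real.exp (-x)) x := by
      exact ((Real.hasDerivAt_exp (-x)).comp x (hasDerivAt_neg x)).congr_deriv (mul_neg_one _)
    have h2 : HasDerivAt (fun x : ℝ => 2 + x) 1 x := by
      simpa using (hasDerivAt_id x).const_add (2:ℝ)
    have h3 : HasDerivAt (fun x : ℝ => 2 - x) (-1) x := by
      simpa using (hasDerivAt_id x).const_sub (2:ℝ)
    have := (h2.mul he).sub h3
    exact this.congr_deriv (by ring)
  have hmono : Monotone f := by
    apply monotone_of_deriv_nonneg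
    · exact fun x => (hd x).differentiableAt
    · intro x
      rw [(hd x).deriv]
      have h1 : 1 + x ≤ Real.exp x := by linarith [Real.add_one_le_exp x]
      have h2 : Real.exp (-x) = (Real.exp x)⁻¹ := Real.exp_neg x
      have h3 : 0 < Real.exp x := Real.exp_pos x
      rw [h2, sub_nonneg]
      calc (1 + x) * (Real.exp x)⁻¹ ≤ Real.exp x * (Real.exp x)⁻¹ :=
            mul_le_mul_of_nonneg_right h1 (by positivity)
        _ = 1 := mul_inv_cancel₀ h3.ne'
  have h0 : f 0 = 0 := by simp [hf]
  have hge := hmono hγ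
  rw [h0] at hge
  have hge' : 0 ≤ (2 + γ) * (Real.exp γ)⁻¹ - (2 - γ) := by
    rw [← Real.exp_neg γ]; exact hge
  have h3 : 0 < Real.exp γ := Real.exp_pos γ
  have hic : (Real.exp γ)⁻¹ * Real.exp γ = 1 := inv_mul_cancel₀ h3.ne'
  nlinarith [mul_nonneg hge' h3.le, hic]

theorem exp_ratio_ineq (γ : ℝ) (hγ : 0 ≤ γ) :
    (Real.exp γ - 1)^2 ≤ (3/2) * γ * (Real.exp (2*γ) - (1 + γ/4)^2) := by
  set x := Real.exp γ with hx
  have hx2 : Real.exp (2*γ) = x^2 := by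
    rw [two_mul, Real.exp_add]; ring
  have hA : (2 - γ) * x ≤ 2 + γ := key_exp γ hγ
  have hB : 1 + γ + γ^2/2 ≤ x := by
    have := Real.sum_le_exp_of_nonneg hγ 3
    simp [Finset.sum_range_succ] at this
    nlinarith [this]
  have hx1 : (1:ℝ) ≤ x := by nlinarith
  rw [hx2]
  nlinarith [mul_nonneg hγ (sub_nonneg.mpr hx1), sq_nonneg (x-1), sq_nonneg γ,
    mul_nonneg (mul_nonneg hγ hγ) hγ, mul_le_mul_of_nonneg_left hA hγ,
    mul_le_mul_of_nonneg_right hB hγ, sq_nonneg (x - 1 - γ),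
    mul_nonneg (mul_nonneg hγ hγ) (sub_nonneg.mpr hx1)]
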